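/- Let F be a field. In K_2(2,F), for all t,u,v∈F^* and every integer k we have {tu,v^{2k}}={t,v^{2k}}{u,v^{2k}} and {t^{2k},uv}={t^{2k},u}{t^{2k},v}. -/

import Mathlib

/-!
Common definitions: presentations of the abelian groups `K₂(F)`, `K₂(2,F)` and `K₂(A,F)`
(Rehmann–Morita).  "The abelian group generated by symbols subject to relations" is
formalized as the abelianization of the corresponding presented group.
-/

variable (F : Type) [Field F]

/-- Relators for `K₂(F)`: the Steinberg symbol relations (A1)-(A3).
(A3) `{u, 1-u} = 1` (for `u ≠ 1`) is encoded as: for units `u, w` with `(w : F) = 1 - u`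
(which forces `u ≠ 1`), `{u, w}` is a relator. -/
def K2Rels : Set (FreeGroup (Fˣ × Fˣ)) :=
  {r | (∃ t u v : Fˣ, r = FreeGroup.of (t * u, v) * (FreeGroup.of (t, v) * FreeGroup.of (u, v))⁻¹) ∨
       (∃ t u v : Fˣ, r = FreeGroup.of (t, u * v) * (FreeGroup.of (t, u) * FreeGroup.of (t, v))⁻¹) ∨
       (∃ u w : Fˣ, (w : F) = 1 - (u : F) ∧ r = FreeGroup.of (u, w))}

/-- `K₂(F)`: the abelian group generated by the symbols `{u,v}`, `u v ∈ Fˣ`,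
subject to the Steinberg symbol relations (A1)-(A3). -/
def K2 : Type := Abelianization (PresentedGroup (K2Rels F))

noncomputable instance : CommGroup (K2 F) := inferInstanceAs (CommGroup (Abelianization _))

/-- The Steinberg symbol `{u,v}` in `K₂(F)`. -/
def K2.sym (u v : Fˣ) : K2 F := Abelianization.of (PresentedGroup.of (u, v))

/-- The subgroup `m·K₂(F)` of `m`-th powers of elements of `K₂(F)`. -/
noncomputable def K2.powSubgroup (m : ℕ) : Subgroup (K2 F) := Subgroup.closure {x | ∃ y : K2 F, x = y ^ m}

/-- Relators for `K₂(2,F)`: the Steinberg cocycle relations (B1)-(B4). -/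
def K2SLRels : Set (FreeGroup (Fˣ × Fˣ)) :=
  {r | (∃ t u v : Fˣ, r = FreeGroup.of (t, u) * FreeGroup.of (t * u, v) *
          (FreeGroup.of (t, u * v) * FreeGroup.of (u, v))⁻¹) ∨
       (r = FreeGroup.of ((1 : Fˣ), (1 : Fˣ))) ∨
       (∃ u v : Fˣ, r = FreeGroup.of (u, v) * (FreeGroup.of (u⁻¹, v⁻¹))⁻¹) ∨
       (∃ u v w : Fˣ, (w : F) = 1 - (u : F) ∧
          r = FreeGroup.of (u, v) * (FreeGroup.of (u, w * v))⁻¹)}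

/-- `K₂(2,F)`: the abelian group generated by the symbols `{u,v}`, `u v ∈ Fˣ`,
subject to the Steinberg cocycle relations (B1)-(B4). -/
def K2SL : Type := Abelianization (PresentedGroup (K2SLRels F))

noncomputable instance : CommGroup (K2SL F) := inferInstanceAs (CommGroup (Abelianization _))

/-- The Steinberg cocycle `{u,v}` in `K₂(2,F)`. -/
def K2SL.sym (u v : Fˣ) : K2SL F := Abelianization.of (PresentedGroup.of (u, v))

/-- The subgroup `m⟨{u²,v}⟩` of `K₂(2,F)` generated by the elements `{u²,v}^m`, `u v ∈ Fˣ`. -/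
noncomputable def K2SL.sqSubgroup (m : ℤ) : Subgroup (K2SL F) :=
  Subgroup.closure {x | ∃ u v : Fˣ, x = (K2SL.sym F (u ^ 2) v) ^ m}

/-- A generalized Cartan matrix: `a_{ii} = 2`, off-diagonal entries `≤ 0`,
and `a_{ij} = 0 ↔ a_{ji} = 0`. -/
def IsGCM {n : ℕ} (A : Matrix (Fin n) (Fin n) ℤ) : Prop :=
  (∀ i, A i i = 2) ∧ (∀ i j, i ≠ j → A i j ≤ 0) ∧ (∀ i j, A i j = 0 ↔ A j i = 0)

/-- Relators for `K₂(A,F)`: the Rehmann–Morita relations (L1)-(L7). -/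
def K2ARels {n : ℕ} (A : Matrix (Fin n) (Fin n) ℤ) : Set (FreeGroup (Fin n × Fˣ × Fˣ)) :=
  {r | (∃ (i : Fin n) (t u v : Fˣ),
          r = FreeGroup.of (i, t, u) * FreeGroup.of (i, t * u, v) *
              (FreeGroup.of (i, t, u * v) * FreeGroup.of (i, u, v))⁻¹) ∨
       (∃ i : Fin n, r = FreeGroup.of (i, 1, 1)) ∨
       (∃ (i : Fin n) (u v : Fˣ),
          r = FreeGroup.of (i, u, v) * (FreeGroup.of (i, u⁻¹, v⁻¹))⁻¹) ∨
       (∃ (i : Fin n) (u v w : Fˣ), (w : F) = 1 - (u : F) ∧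
          r = FreeGroup.of (i, u, v) * (FreeGroup.of (i, u, w * v))⁻¹) ∨
       (∃ (i j : Fin n) (u v : Fˣ), i ≠ j ∧
          r = FreeGroup.of (i, u, v ^ (A j i)) * (FreeGroup.of (j, u ^ (A i j), v))⁻¹) ∨
       (∃ (i j : Fin n) (t u v : Fˣ), i ≠ j ∧
          r = FreeGroup.of (i, t * u, v ^ (A j i)) *
              (FreeGroup.of (i, t, v ^ (A j i)) * FreeGroup.of (i, u, v ^ (A j i)))⁻¹) ∨
       (∃ (i j : Fin n) (t u v : Fˣ), i ≠ j ∧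
          r = FreeGroup.of (i, t ^ (A j i), u * v) *
              (FreeGroup.of (i, t ^ (A j i), u) * FreeGroup.of (i, t ^ (A j i), v))⁻¹)}

/-- `K₂(A,F)`: the abelian group generated by the symbols `c_i(u,v)` subject to (L1)-(L7). -/
def K2A {n : ℕ} (A : Matrix (Fin n) (Fin n) ℤ) : Type :=
  Abelianization (PresentedGroup (K2ARels F A))

noncomputable instance {n : ℕ} (A : Matrix (Fin n) (Fin n) ℤ) : CommGroup (K2A F A) :=
  inferInstanceAs (CommGroup (Abelianization _))

/-- The generator `c_i(u,v)` of `K₂(A,F)`. -/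
def K2A.c {n : ℕ} (A : Matrix (Fin n) (Fin n) ℤ) (i : Fin n) (u v : Fˣ) : K2A F A :=
  Abelianization.of (PresentedGroup.of (i, u, v))

open scoped Classical in
/-- `LGroup F p` is `K₂(F)` when `p` holds and `K₂(2,F)` otherwise.  Taking
`p = "the i-th column of A has an odd entry"` gives the factor `L_i`. -/
noncomputable def LGroup (p : Prop) : Type :=
  Abelianization (PresentedGroup (if p then K2Rels F else K2SLRels F))

noncomputable instance (p : Prop) : CommGroup (LGroup F p) :=
  inferInstanceAs (CommGroup (Abelianization _))

/-- The symbol `{u,v}` (Steinberg symbol resp. cocycle) in `LGroup F p`. -/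
noncomputable def LGroup.sym (p : Prop) (u v : Fˣ) : LGroup F p :=
  Abelianization.of (PresentedGroup.of (u, v))

/-- Relators `x_i^{a_{ji}} = x_j^{a_{ij}}` (`i < j`) for the auxiliary abelian group `G`. -/
def GRels {n : ℕ} (A : Matrix (Fin n) (Fin n) ℤ) : Set (FreeGroup (Fin n)) :=
  {r | ∃ i j : Fin n, i < j ∧ r = FreeGroup.of i ^ (A j i) * (FreeGroup.of j ^ (A i j))⁻¹}

/-- The abelian group `G = ⟨x_1,…,x_n ∣ x_i^{a_{ji}} = x_j^{a_{ij}}, [x_i,x_j] = 1⟩`. -/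
def GGroup {n : ℕ} (A : Matrix (Fin n) (Fin n) ℤ) : Type :=
  Abelianization (PresentedGroup (GRels A))

noncomputable instance {n : ℕ} (A : Matrix (Fin n) (Fin n) ℤ) : CommGroup (GGroup A) :=
  inferInstanceAs (CommGroup (Abelianization _))

namespace K2SLAux

variable (F : Type) [Field F]

local notation "s" => K2SL.sym F

noncomputable def phi : FreeGroup (Fˣ × Fˣ) →* K2SL F :=
  (Abelianization.of (G := PresentedGroup (K2SLRels F))).comp
    (QuotientGroup.mk' (Subgroup.normalClosure (K2SLRels F)))

lemma phi_rel {r : FreeGroup (Fˣ × Fˣ)} (hr : r ∈ K2SLRels F) : phi F r = 1 := by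
  have h2 : (QuotientGroup.mk' (Subgroup.normalClosure (K2SLRels F))) r = 1 :=
    (QuotientGroup.eq_one_iff r).mpr (Subgroup.subset_normalClosure hr)
  exact (congrArg (Abelianization.of (G := PresentedGroup (K2SLRels F))) h2).trans (map_one _)

lemma relB1 (t u v : Fˣ) :
    s t u * s (t * u) v = s t (u * v) * s u v := by
  have h := phi_rel F (r := FreeGroup.of (t, u) * FreeGroup.of (t * u, v) *
      (FreeGroup.of (t, u * v) * FreeGroup.of (u, v))⁻¹) (Or.inl ⟨t, u, v, rfl⟩)
  rw [map_mul, map_mul, map_inv, map_mul, mul_inv_eq_one] at h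
  exact h

lemma relB2 : s 1 1 = 1 := phi_rel F (Or.inr (Or.inl rfl))

lemma relB3 (u v : Fˣ) : s u v = s u⁻¹ v⁻¹ := by
  have h := phi_rel F (r := FreeGroup.of (u, v) * (FreeGroup.of (u⁻¹, v⁻¹))⁻¹)
      (Or.inr (Or.inr (Or.inl ⟨u, v, rfl⟩)))
  rw [map_mul, map_inv, mul_inv_eq_one] at h
  exact h

lemma relB4 (u v w : Fˣ) (hw : (w : F) = 1 - (u : F)) : s u v = s u (w * v) := by
  have h := phi_rel F (r := FreeGroup.of (u, v) * (FreeGroup.of (u, w * v))⁻¹)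
      (Or.inr (Or.inr (Or.inr ⟨u, v, w, hw, rfl⟩)))
  rw [map_mul, map_inv, mul_inv_eq_one] at h
  exact h

lemma sym_one_right (a : Fˣ) : s a 1 = 1 := by
  have h := relB1 F a 1 1
  simp only [mul_one] at h
  rw [relB2 F] at h
  exact mul_left_cancel (h.trans (mul_one _).symm).symm |>.symm

lemma sym_one_left (c : Fˣ) : s 1 c = 1 := by
  have h := relB1 F 1 1 c
  simp only [one_mul] at h
  rw [relB2 F, one_mul] at h
  have h2 : s 1 c * 1 = s 1 c * s 1 c := by rw [mul_one]; exact h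
  exact (mul_left_cancel h2).symm

lemma sym_one_sub (u w : Fˣ) (hw : (w : F) = 1 - (u : F)) : s u w = 1 := by
  have h := relB4 F u 1 w hw
  rw [mul_one, sym_one_right F u] at h
  exact h.symm

lemma symK (a v : Fˣ) : s a (-a * v) = s a v := by
  by_cases ha : a = 1
  · subst ha; rw [sym_one_left, sym_one_left]
  · have ha0 : (a : F) ≠ 0 := a.ne_zero
    have ha1 : (a : F) ≠ 1 := fun h => ha (Units.ext (by simpa using h))
    have hbF : (1 : F) - (a : F)⁻¹ ≠ 0 := by
      rw [sub_ne_zero]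
      exact fun h => ha1 (inv_eq_one.mp h.symm)
    have hcF : (1 : F) - (a : F) ≠ 0 := sub_ne_zero.mpr (Ne.symm ha1)
    set b : Fˣ := Units.mk0 _ hbF with hbdef
    set c : Fˣ := Units.mk0 _ hcF with hcdef
    have hb : (b : F) = 1 - ((a⁻¹ : Fˣ) : F) := by
      rw [hbdef]; simp
    have hc : (c : F) = 1 - (a : F) := rfl
    have hcb : c * b⁻¹ = -a := by
      apply Units.ext
      have hbv : ((b⁻¹ : Fˣ) : F) = ((1 : F) - (a : F)⁻¹)⁻¹ := by
        rw [Units.val_inv_eq_inv_val, hbdef, Units.val_mk0]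
      have hsub : (a : F) - 1 ≠ 0 := sub_ne_zero.mpr ha1
      rw [Units.val_mul, hbv, hc]
      push_cast
      field_simp
      ring
    have h1 := relB3 F a v
    have h2 := relB4 F a⁻¹ v⁻¹ b hb
    have h3 := relB3 F a⁻¹ (b * v⁻¹)
    rw [inv_inv] at h3
    have h4 : (b * v⁻¹)⁻¹ = b⁻¹ * v := by rw [mul_inv_rev, inv_inv, mul_comm]
    have h5 := relB4 F a (b⁻¹ * v) c hc
    have h6 : c * (b⁻¹ * v) = -a * v := by rw [← mul_assoc, hcb]
    rw [h1, h2, h3, h4, h5, h6]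

lemma symM (a : Fˣ) : s a (-a) = 1 := by
  have h := symK F a 1
  rw [mul_one, sym_one_right F a] at h
  exact h

lemma symW (x y : Fˣ) : s x y = s x (y * y) * s y x := by
  have h := relB1 F x y (-(x * y))
  rw [symM F (x * y), mul_one] at h
  have e1 : y * -(x * y) = -x * (y * y) := Units.ext (by push_cast; ring)
  rw [e1, symK F x (y * y)] at h
  have e2 : -(x * y) = -y * x := Units.ext (by push_cast; ring)
  rw [e2, symK F y x] at h
  exact h

lemma sq_mul_left (p q y : Fˣ) :
    s (p * q) (y * y) = s p (y * y) * s q (y * y) := by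
  have h1 := relB1 F p q y
  have h2 := relB1 F y p q
  have h3 := relB1 F p y q
  have comb := congrArg₂ (· * ·) (congrArg₂ (· * ·) h1 h2) h3.symm
  have star : s (p * q) y * (s y p * s y q) = s p y * s q y * s y (p * q) := by
    apply mul_right_cancel (b := s p q * (s (y * p) q * s p (y * q)))
    simpa [mul_comm, mul_left_comm, mul_assoc] using comb
  rw [symW F (p * q) y, symW F p y, symW F q y] at star
  apply mul_right_cancel (b := s y (p * q) * (s y p * s y q))
  simpa [mul_comm, mul_left_comm, mul_assoc] using star

lemma sq_mul_right (y u v : Fˣ) :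
    s (y * y) (u * v) = s (y * y) u * s (y * y) v := by
  have c3 := relB1 F u v (y * y)
  rw [sq_mul_left F u v y] at c3
  have hg : s u (v * (y * y)) = s u v * s u (y * y) := by
    apply mul_right_cancel (b := s v (y * y))
    simpa [mul_comm, mul_left_comm, mul_assoc] using c3.symm
  have c2 := relB1 F u (y * y) v
  rw [mul_comm (y * y) v, hg] at c2
  have hb : s (u * (y * y)) v = s u v * s (y * y) v := by
    apply mul_left_cancel (a := s u (y * y))
    simpa [mul_comm, mul_left_comm, mul_assoc] using c2
  have c1 := relB1 F (y * y) u v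
  rw [mul_comm (y * y) u, hb] at c1
  apply mul_right_cancel (b := s u v)
  simpa [mul_comm, mul_left_comm, mul_assoc] using c1.symm

end K2SLAux

/-- In `K₂(2,F)`, `{tu, v^{2k}} = {t, v^{2k}}{u, v^{2k}}` and
`{t^{2k}, uv} = {t^{2k}, u}{t^{2k}, v}` for every integer `k`. -/
theorem K2SL.sym_even_bimul (F : Type) [Field F] (t u v : Fˣ) (k : ℤ) :
    K2SL.sym F (t * u) (v ^ (2 * k)) =
      K2SL.sym F t (v ^ (2 * k)) * K2SL.sym F u (v ^ (2 * k)) ∧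
    K2SL.sym F (t ^ (2 * k)) (u * v) =
      K2SL.sym F (t ^ (2 * k)) u * K2SL.sym F (t ^ (2 * k)) v := by
  constructor
  · rw [two_mul, zpow_add]
    exact K2SLAux.sq_mul_left F t u (v ^ k)
  · rw [two_mul, zpow_add]
    exact K2SLAux.sq_mul_right F (t ^ k) u v
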